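/- arXiv:1709.05957 — 3 statements merged into one kernel-verified Lean document; each statement's English description precedes it below -/
import Mathlib

section
/- Let v : ℝ³ → ℝ³ be a C¹ vector field that is (1) divergence free, and suppose v = ∇f × ∇g for C² functions f, g : ℝ³ → ℝ and the gradients of f and g satisfy ∇g · curl v = -∂_f H(f,g) and ∇f · curl v = ∂_g H(f,g) for some C¹ function H : ℝ² → ℝ. Then v × curl v = ∇ₓ(H(f(x), g(x))), the spatial gradient of the composition H(f, g). -/
open Matrix MeasureTheory Real

noncomputable def pd (i : Fin 3) (f : (Fin 3 → ℝ) → ℝ) : (Fin 3 → ℝ) → ℝ :=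
  fun x => fderiv ℝ f x (Pi.single i 1)

noncomputable def grad (f : (Fin 3 → ℝ) → ℝ) (x : Fin 3 → ℝ) : Fin 3 → ℝ :=
  fun i => pd i f x

noncomputable def divg (v : (Fin 3 → ℝ) → (Fin 3 → ℝ)) (x : Fin 3 → ℝ) : ℝ :=
  ∑ i, pd i (fun y => v y i) x

noncomputable def curl (v : (Fin 3 → ℝ) → (Fin 3 → ℝ)) (x : Fin 3 → ℝ) : Fin 3 → ℝ :=
  ![pd 1 (fun y => v y 2) x - pd 2 (fun y => v y 1) x,
    pd 2 (fun y => v y 0) x - pd 0 (fun y => v y 2) x,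
    pd 0 (fun y => v y 1) x - pd 1 (fun y => v y 0) x]

lemma triple_cross (a b r : Fin 3 → ℝ) :
    crossProduct (crossProduct a b) r = (a ⬝ᵥ r) • b - (b ⬝ᵥ r) • a := by
  simp only [cross_apply, dotProduct, Fin.sum_univ_three]
  funext i
  fin_cases i <;> simp <;> ring

lemma chain_pd (f g : (Fin 3 → ℝ) → ℝ) (H : ℝ × ℝ → ℝ)
    (hf : ContDiff ℝ 2 f) (hg : ContDiff ℝ 2 g) (hH : ContDiff ℝ 1 H)
    (x : Fin 3 → ℝ) (i : Fin 3) :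
    pd i (fun y => H (f y, g y)) x =
      pd i f x * fderiv ℝ H (f x, g x) (1, 0) + pd i g x * fderiv ℝ H (f x, g x) (0, 1) := by
  have hfd : DifferentiableAt ℝ f x := (hf.differentiable two_ne_zero).differentiableAt
  have hgd : DifferentiableAt ℝ g x := (hg.differentiable two_ne_zero).differentiableAt
  have hFd : DifferentiableAt ℝ (fun y => (f y, g y)) x := hfd.prodMk hgd
  have hHd : DifferentiableAt ℝ H (f x, g x) := (hH.differentiable one_ne_zero).differentiableAt
  have hcomp : fderiv ℝ (fun y => H (f y, g y)) x =
      (fderiv ℝ H (f x, g x)).comp (fderiv ℝ (fun y => (f y, g y)) x) :=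
    fderiv_comp x hHd hFd
  have hF : fderiv ℝ (fun y => (f y, g y)) x (Pi.single i 1) = (pd i f x, pd i g x) := by
    rw [DifferentiableAt.fderiv_prodMk hfd hgd]; rfl
  rw [pd, hcomp]
  simp only [ContinuousLinearMap.comp_apply, hF]
  have : ((pd i f x, pd i g x) : ℝ × ℝ) = pd i f x • ((1:ℝ), (0:ℝ)) + pd i g x • ((0:ℝ), (1:ℝ)) := by
    simp [Prod.ext_iff]
  rw [this, map_add, ContinuousLinearMap.map_smul, ContinuousLinearMap.map_smul]
  simp [mul_comm]

/-- If `v = ∇f × ∇g` is divergence free and `∇g · curl v = -∂_f H(f,g)`,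
`∇f · curl v = ∂_g H(f,g)`, then `v × curl v = ∇ₓ(H(f,g))`. -/
theorem stmt_6 (v : (Fin 3 → ℝ) → (Fin 3 → ℝ)) (f g : (Fin 3 → ℝ) → ℝ) (H : ℝ × ℝ → ℝ)
    (hv : ContDiff ℝ 1 v) (hf : ContDiff ℝ 2 f) (hg : ContDiff ℝ 2 g) (hH : ContDiff ℝ 1 H)
    (hdiv : ∀ x, divg v x = 0)
    (hrep : ∀ x, v x = crossProduct (grad f x) (grad g x))
    (h1 : ∀ x, (grad g x) ⬝ᵥ (curl v x) = -(fderiv ℝ H (f x, g x) ((1 : ℝ), (0 : ℝ))))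
    (h2 : ∀ x, (grad f x) ⬝ᵥ (curl v x) = fderiv ℝ H (f x, g x) ((0 : ℝ), (1 : ℝ))) :
    ∀ x, crossProduct (v x) (curl v x) = grad (fun y => H (f y, g y)) x := by
  intro x
  rw [hrep x, triple_cross, h1 x, h2 x]
  funext i
  rw [grad, chain_pd f g H hf hg hH x i]
  simp only [Pi.sub_apply, Pi.smul_apply, smul_eq_mul, grad]
  ring
end

section
/- Let v : ℝ³ → ℝ³ be a C¹ vector field, f, g : ℝ³ → ℝ C² functions with v = ∇f × ∇g, and H : ℝ² → ℝ C¹. If v × curl v = ∇ₓ(H(f,g)), then v satisfies the stationary Euler equation (v·∇)v = -∇p with pressure p = -½|v|² + H(f,g). -/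
open Matrix MeasureTheory Real

/-- If `v = ∇f × ∇g` and `v × curl v = ∇ₓ(H(f,g))`, then `v` satisfies the stationary Euler
equation `(v·∇)v = -∇p` with `p = -½|v|² + H(f,g)`. -/
theorem stmt_7 (v : (Fin 3 → ℝ) → (Fin 3 → ℝ)) (f g : (Fin 3 → ℝ) → ℝ) (H : ℝ × ℝ → ℝ)
    (hv : ContDiff ℝ 1 v) (hf : ContDiff ℝ 2 f) (hg : ContDiff ℝ 2 g) (hH : ContDiff ℝ 1 H)
    (hrep : ∀ x, v x = crossProduct (grad f x) (grad g x))
    (hcurl : ∀ x, crossProduct (v x) (curl v x) = grad (fun y => H (f y, g y)) x) :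
    ∀ x i, (∑ j, v x j * pd j (fun y => v y i) x) =
      - pd i (fun y => -(1 / 2) * (∑ k, (v y k) ^ 2) + H (f y, g y)) x := by
  intro x i
  have hvd : Differentiable ℝ v := hv.differentiable one_ne_zero
  have hvk : ∀ k, HasFDerivAt (fun y => v y k) (fderiv ℝ (fun y => v y k) x) x :=
    fun k => ((differentiable_pi.mp hvd) k x).hasFDerivAt
  set dk : Fin 3 → (Fin 3 → ℝ) →L[ℝ] ℝ := fun k => fderiv ℝ (fun y => v y k) x with hdk
  have hB : Differentiable ℝ (fun y => H (f y, g y)) :=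
    (hH.differentiable one_ne_zero).comp
      ((hf.differentiable (by norm_num)).prodMk (hg.differentiable (by norm_num)))
  set dB : (Fin 3 → ℝ) →L[ℝ] ℝ := fderiv ℝ (fun y => H (f y, g y)) x with hdB
  have hsq : ∀ k, HasFDerivAt (fun y => (v y k) ^ 2) ((2 * v x k) • dk k) x := by
    intro k
    have h : HasFDerivAt (fun y => v y k * v y k) (v x k • dk k + v x k • dk k) x :=
      (hvk k).mul (hvk k)
    have h2 : v x k • dk k + v x k • dk k = (2 * v x k) • dk k := by
      rw [two_mul, add_smul]
    simpa [pow_two, h2] using h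
  have hA : HasFDerivAt (fun y => ∑ k, (v y k) ^ 2) (∑ k, (2 * v x k) • dk k) x :=
    HasFDerivAt.fun_sum fun k _ => hsq k
  have htot : HasFDerivAt (fun y => -(1 / 2) * (∑ k, (v y k) ^ 2) + H (f y, g y))
      (((-(1 / 2) : ℝ)) • (∑ k, (2 * v x k) • dk k) + dB) x :=
    (hA.const_mul (-(1 / 2) : ℝ)).add (hB x).hasFDerivAt
  -- evaluate pd of the pressure-ish function
  have hpd : pd i (fun y => -(1 / 2) * (∑ k, (v y k) ^ 2) + H (f y, g y)) x
      = -(1 / 2) * (∑ k, (2 * v x k) * (dk k (Pi.single i 1))) + dB (Pi.single i 1) := by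
    simp only [pd, htot.fderiv]
    simp [Finset.mul_sum]
  have hBpd : dB (Pi.single i 1) = crossProduct (v x) (curl v x) i := by
    rw [hcurl x]; rfl
  have hpdk : ∀ k j, pd j (fun y => v y k) x = dk k (Pi.single j 1) := fun k j => rfl
  rw [hpd, hBpd]
  simp only [hpdk]
  fin_cases i <;>
    simp [curl, crossProduct, Fin.sum_univ_three, hpdk] <;> ring
end

section
/- Let Φ : ℝ² → ℝ² be C¹ with det Φ'(p) = 1 for all p, and suppose Φ = T + Φ₀ where T is linear and Φ₀ is periodic with respect to a lattice of full rank in ℝ². Then T is bijective. -/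
/-- Auxiliary: a function periodic with period `ω` is periodic with period `n • ω` for `n : ℤ`. -/
lemma stmt_16_aux {E : Type*} [AddCommGroup E] [Module ℝ E] {g : E → ℝ} {ω : E}
    (h : ∀ p, g (p + ω) = g p) : ∀ (n : ℤ) (p : E), g (p + (n : ℝ) • ω) = g p := by
  intro n
  induction n using Int.induction_on with
  | zero => simp
  | succ k ih =>
    intro p
    have h1 : p + ((k + 1 : ℤ) : ℝ) • ω = (p + ω) + ((k : ℤ) : ℝ) • ω := by
      push_cast; module
    rw [h1, ih, h]
  | pred k ih =>
    intro p
    have h1 : (p + ((-(k : ℤ) - 1 : ℤ) : ℝ) • ω) + ω = p + ((-k : ℤ) : ℝ) • ω := by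
      push_cast; module
    calc g (p + ((-(k : ℤ) - 1 : ℤ) : ℝ) • ω)
        = g ((p + ((-(k : ℤ) - 1 : ℤ) : ℝ) • ω) + ω) := (h _).symm
      _ = g (p + ((-k : ℤ) : ℝ) • ω) := by rw [h1]
      _ = g p := ih p

/-- If `Φ = T + Φ₀` is `C¹` with `det Φ' = 1` everywhere, `T` linear and `Φ₀` periodic with
respect to a full-rank lattice, then `T` is bijective. -/
theorem stmt_16 (Φ Φ₀ : (Fin 2 → ℝ) → (Fin 2 → ℝ)) (T : (Fin 2 → ℝ) →ₗ[ℝ] (Fin 2 → ℝ))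
    (hΦ : ContDiff ℝ 1 Φ)
    (hdet : ∀ p, LinearMap.det ((fderiv ℝ Φ p).toLinearMap) = 1)
    (ω₁ ω₂ : Fin 2 → ℝ) (hω : LinearIndependent ℝ ![ω₁, ω₂])
    (hsum : ∀ p, Φ p = T p + Φ₀ p)
    (hper1 : ∀ p, Φ₀ (p + ω₁) = Φ₀ p) (hper2 : ∀ p, Φ₀ (p + ω₂) = Φ₀ p) :
    Function.Bijective T := by
  -- It suffices to show `T` is surjective.
  rw [Function.Bijective, ← LinearMap.injective_iff_surjective (f := T), and_self,
    LinearMap.injective_iff_surjective]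
  by_contra hsurj
  -- Choose a nonzero functional vanishing on the range of `T`.
  have hlt : LinearMap.range T < ⊤ := lt_top_iff_ne_top.2 (fun h => hsurj
    (LinearMap.range_eq_top.1 h))
  obtain ⟨ℓ, hℓ0, hℓ⟩ := (LinearMap.range T).exists_dual_map_eq_bot_of_lt_top hlt inferInstance
  have hℓT : ∀ x, ℓ (T x) = 0 := by
    intro x
    have : ℓ (T x) ∈ (LinearMap.range T).map ℓ :=
      Submodule.mem_map_of_mem (LinearMap.mem_range_self T x)
    rwa [hℓ, Submodule.mem_bot] at this
  set ℓc : (Fin 2 → ℝ) →L[ℝ] ℝ := LinearMap.toContinuousLinearMap ℓ with hℓc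
  set f : (Fin 2 → ℝ) → ℝ := fun p => ℓ (Φ p) with hf
  -- `f` is periodic
  have hfp : ∀ p, f p = ℓ (Φ₀ p) := by
    intro p; simp [hf, hsum p, map_add, hℓT]
  have hf1 : ∀ p, f (p + ω₁) = f p := by intro p; rw [hfp, hfp, hper1]
  have hf2 : ∀ p, f (p + ω₂) = f p := by intro p; rw [hfp, hfp, hper2]
  have hfz1 := stmt_16_aux hf1
  have hfz2 := stmt_16_aux hf2
  -- `f` is continuous; it attains a maximum on a fundamental domain.
  have hfc : Continuous f := ℓc.continuous.comp hΦ.continuous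
  set K : Set (Fin 2 → ℝ) :=
    (fun st : ℝ × ℝ => st.1 • ω₁ + st.2 • ω₂) '' (Set.Icc (0:ℝ) 1 ×ˢ Set.Icc (0:ℝ) 1) with hK
  have hKc : IsCompact K :=
    (isCompact_Icc.prod isCompact_Icc).image (by fun_prop)
  have hKne : K.Nonempty :=
    ⟨(0:ℝ) • ω₁ + (0:ℝ) • ω₂, ⟨(0,0), by simp⟩⟩
  obtain ⟨p₀, _, hmax⟩ := hKc.exists_isMaxOn hKne (hfc.continuousOn)
  -- The maximum on `K` is a global maximum.
  have hglob : ∀ p, f p ≤ f p₀ := by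
    intro p
    have hcard : Fintype.card (Fin 2) = Module.finrank ℝ (Fin 2 → ℝ) := by
      simp [Module.finrank_fin_fun]
    set B := basisOfLinearIndependentOfCardEqFinrank hω hcard with hB
    have hBc : ∀ i, B i = ![ω₁, ω₂] i := fun i => by
      rw [hB, coe_basisOfLinearIndependentOfCardEqFinrank]
    set a : ℝ := B.repr p 0 with ha
    set b : ℝ := B.repr p 1 with hb
    have hrepr : p = a • ω₁ + b • ω₂ := by
      conv_lhs => rw [← B.sum_repr p]
      rw [Fin.sum_univ_two, hBc 0, hBc 1]
      simp [ha, hb]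
    set q : Fin 2 → ℝ := Int.fract a • ω₁ + Int.fract b • ω₂ with hq
    have hqK : q ∈ K := by
      refine ⟨(Int.fract a, Int.fract b), ?_, rfl⟩
      constructor
      · exact ⟨Int.fract_nonneg a, (Int.fract_lt_one a).le⟩
      · exact ⟨Int.fract_nonneg b, (Int.fract_lt_one b).le⟩
    have hpq : p = (q + ((⌊a⌋ : ℤ) : ℝ) • ω₁) + ((⌊b⌋ : ℤ) : ℝ) • ω₂ := by
      rw [hrepr, hq]
      have h1 : Int.fract a = a - ((⌊a⌋ : ℤ) : ℝ) := rfl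
      have h2 : Int.fract b = b - ((⌊b⌋ : ℤ) : ℝ) := rfl
      rw [h1, h2]; module
    have : f p = f q := by
      rw [hpq, hfz2 ⌊b⌋, hfz1 ⌊a⌋]
    rw [this]
    exact hmax hqK
  -- Hence the derivative of `f` at `p₀` vanishes.
  have hlm : IsLocalMax f p₀ := Filter.Eventually.of_forall hglob
  have hD0 : fderiv ℝ f p₀ = 0 := hlm.fderiv_eq_zero
  -- But `fderiv f p₀ = ℓ ∘ fderiv Φ p₀` with `fderiv Φ p₀` invertible, so `ℓ = 0`.
  have hΦd : DifferentiableAt ℝ Φ p₀ := (hΦ.differentiable one_ne_zero).differentiableAt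
  have hcomp : HasFDerivAt f (ℓc.comp (fderiv ℝ Φ p₀)) p₀ :=
    ℓc.hasFDerivAt.comp p₀ hΦd.hasFDerivAt
  have hcomp0 : ℓc.comp (fderiv ℝ Φ p₀) = 0 := by rw [← hcomp.fderiv, hD0]
  have hdne : LinearMap.det ((fderiv ℝ Φ p₀).toLinearMap) ≠ 0 := by
    rw [hdet p₀]; exact one_ne_zero
  have hDsurj : Function.Surjective (fderiv ℝ Φ p₀) :=
    ((fderiv ℝ Φ p₀).toLinearMap.equivOfDetNeZero hdne).surjective
  refine hℓ0 (LinearMap.ext fun x => ?_)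
  obtain ⟨v, hv⟩ := hDsurj x
  have : ℓc ((fderiv ℝ Φ p₀) v) = 0 := by
    rw [← ContinuousLinearMap.comp_apply, hcomp0]; rfl
  rw [hv] at this
  simpa [hℓc] using this
end
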